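/- Let {M₁, M₂} be a two-outcome POVM in dimension 2 with Matrix.trace M₁ ≤ Matrix.trace M₂, let φ ∈ ℂ² be a unit vector, and set p(x) = ⟪φ, M_x·φ⟫ for x = 1,2. Define K₁₁ = √M₁ · (outer product |φ⟩⟨φ|) · √M₁, K₂₁ = p(1)·𝟙 − K₁₁, K₁₂ = M₁ − K₁₁, and K₂₂ = p(2)·𝟙 − K₁₂. Then all four matrices K_{x,j} are positive semidefinite, K₁₁ + K₂₁ = p(1)·𝟙, K₁₂ + K₂₂ = p(2)·𝟙, K₁₁ + K₁₂ = M₁, K₂₁ + K₂₂ = M₂ (so K is a valid decomposition of {M₁,M₂}), and its objective at φ equals ⟪φ, K₁₁·φ⟫ + ⟪φ, K₂₂·φ⟫ = 1 − 2·p(1) + 2·⟪φ, √M₁·φ⟫². -/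

import Mathlib

open Matrix ComplexOrder

noncomputable section

/-- The square root of a positive semidefinite matrix (as defined in the older Mathlib). -/
noncomputable def Matrix.PosSemidef.sqrt {n : Type*} [Fintype n] [DecidableEq n]
    {A : Matrix n n ℂ} (hA : A.PosSemidef) : Matrix n n ℂ :=
  hA.isHermitian.eigenvectorUnitary.1 * diagonal ((↑) ∘ (√·) ∘ hA.isHermitian.eigenvalues) *
  (star hA.isHermitian.eigenvectorUnitary : Matrix n n ℂ)

lemma Matrix.PosSemidef.posSemidef_sqrt {n : Type*} [Fintype n] [DecidableEq n]
    {A : Matrix n n ℂ} (hA : A.PosSemidef) : hA.sqrt.PosSemidef := by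
  unfold Matrix.PosSemidef.sqrt
  exact (posSemidef_diagonal_iff.mpr fun i => by
    simpa [Function.comp_apply] using
      Complex.zero_le_real.mpr (Real.sqrt_nonneg (hA.isHermitian.eigenvalues i))).mul_mul_conjTranspose_same _

lemma Matrix.PosSemidef.sqrt_mul_self {n : Type*} [Fintype n] [DecidableEq n]
    {A : Matrix n n ℂ} (hA : A.PosSemidef) : hA.sqrt * hA.sqrt = A := by
  have hU : star (hA.isHermitian.eigenvectorUnitary : Matrix n n ℂ) *
      (hA.isHermitian.eigenvectorUnitary : Matrix n n ℂ) = 1 :=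
    Matrix.mem_unitaryGroup_iff'.mp hA.isHermitian.eigenvectorUnitary.2
  conv_rhs => rw [hA.isHermitian.spectral_theorem, Unitary.conjStarAlgAut_apply]
  unfold Matrix.PosSemidef.sqrt
  rw [show ∀ a b c d e f : Matrix n n ℂ, a * b * c * (d * e * f) = a * (b * (c * d) * e) * f by
    intros; simp only [Matrix.mul_assoc], hU, Matrix.mul_one, diagonal_mul_diagonal]
  congr 2
  congr 1
  funext i
  show ((√(hA.isHermitian.eigenvalues i) : ℝ) : ℂ) * ((√(hA.isHermitian.eigenvalues i) : ℝ) : ℂ) =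
    (hA.isHermitian.eigenvalues i : ℂ)
  rw [← Complex.ofReal_mul, Real.mul_self_sqrt (hA.eigenvalues_nonneg i)]

/-- `K` is a valid decomposition of the POVM `M`. -/
def IsDecomp {m d : ℕ} (M : Fin m → Matrix (Fin d) (Fin d) ℂ)
    (K : Fin m → Fin m → Matrix (Fin d) (Fin d) ℂ) : Prop :=
  (∀ x j, (K x j).PosSemidef) ∧
  (∀ j, (d : ℂ) • ∑ x, K x j = (∑ x, (K x j).trace) • (1 : Matrix (Fin d) (Fin d) ℂ)) ∧
  (∀ x, ∑ j, K x j = M x)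

/-- Eve's objective for the decomposition `K` and the state `φ`:
`∑_j ⟪φ, (K j j) φ⟫`. -/
def objective {m d : ℕ} (K : Fin m → Fin m → Matrix (Fin d) (Fin d) ℂ)
    (φ : Fin d → ℂ) : ℝ :=
  ∑ j, (star φ ⬝ᵥ (K j j).mulVec φ).re

lemma dot_vecMulVec_mulVec {n : ℕ} (v a b w : Fin n → ℂ) :
    star v ⬝ᵥ (vecMulVec a b).mulVec w = (star v ⬝ᵥ a) * (b ⬝ᵥ w) := by
  simp only [dotProduct, mulVec, vecMulVec_apply, Finset.mul_sum, Finset.sum_mul, Pi.star_apply]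
  rw [Finset.sum_comm]
  exact Finset.sum_congr rfl fun i _ => Finset.sum_congr rfl fun j _ => by ring

lemma trace_vecMulVec' {n : ℕ} (a b : Fin n → ℂ) :
    (vecMulVec a b).trace = b ⬝ᵥ a := by
  simp [Matrix.trace, Matrix.diag, vecMulVec_apply, dotProduct, mul_comm]

lemma posSemidef_outer {n : ℕ} (a : Fin n → ℂ) : (vecMulVec a (star a)).PosSemidef := by
  refine Matrix.PosSemidef.of_dotProduct_mulVec_nonneg ?_ ?_
  · ext i j
    simp [conjTranspose_apply, vecMulVec_apply, mul_comm]
  · intro v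
    have h : star v ⬝ᵥ (vecMulVec a (star a)).mulVec v
        = star (star a ⬝ᵥ v) * (star a ⬝ᵥ v) := by
      rw [dot_vecMulVec_mulVec, star_dotProduct]
    rw [h]
    exact star_mul_self_nonneg _

lemma conj_outer {n : ℕ} (S : Matrix (Fin n) (Fin n) ℂ) (hS : Sᴴ = S) (a : Fin n → ℂ) :
    S * vecMulVec a (star a) * S = vecMulVec (S.mulVec a) (star (S.mulVec a)) := by
  rw [star_mulVec, hS]
  ext i j
  simp only [mul_apply, vecMulVec_apply, mulVec, vecMul, dotProduct, Pi.star_apply,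
    Finset.sum_mul, Finset.mul_sum]
  refine Finset.sum_congr rfl fun k _ => Finset.sum_congr rfl fun l _ => by ring

lemma trace_smul_one_sub_posSemidef {n : ℕ} {A : Matrix (Fin n) (Fin n) ℂ}
    (hA : A.PosSemidef) :
    (A.trace • (1 : Matrix (Fin n) (Fin n) ℂ) - A).PosSemidef := by
  have hH := hA.1
  have hU : (hH.eigenvectorUnitary : Matrix (Fin n) (Fin n) ℂ) *
      star (hH.eigenvectorUnitary : Matrix (Fin n) (Fin n) ℂ) = 1 :=
    Matrix.mem_unitaryGroup_iff.mp hH.eigenvectorUnitary.2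
  have hU' : star (hH.eigenvectorUnitary : Matrix (Fin n) (Fin n) ℂ) *
      (hH.eigenvectorUnitary : Matrix (Fin n) (Fin n) ℂ) = 1 :=
    Matrix.mem_unitaryGroup_iff'.mp hH.eigenvectorUnitary.2
  have htr : A.trace = ∑ i, (hH.eigenvalues i : ℂ) := by
    conv_lhs => rw [hH.spectral_theorem, Unitary.conjStarAlgAut_apply]
    rw [Matrix.trace_mul_cycle, hU', Matrix.one_mul, Matrix.trace_diagonal]
    simp
  have key : A.trace • (1 : Matrix (Fin n) (Fin n) ℂ) - A =
      (hH.eigenvectorUnitary : Matrix (Fin n) (Fin n) ℂ) *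
        diagonal (fun i => A.trace - (hH.eigenvalues i : ℂ)) *
        star (hH.eigenvectorUnitary : Matrix (Fin n) (Fin n) ℂ) := by
    have hdiag : diagonal (fun i => A.trace - (hH.eigenvalues i : ℂ))
        = A.trace • (1 : Matrix (Fin n) (Fin n) ℂ)
          - diagonal (RCLike.ofReal ∘ hH.eigenvalues) := by
      rw [smul_one_eq_diagonal, diagonal_sub]
      rfl
    rw [hdiag, Matrix.mul_sub, Matrix.sub_mul, Matrix.mul_smul, Matrix.smul_mul, Matrix.mul_one,
      hU]
    congr 1
    conv_lhs => rw [hH.spectral_theorem, Unitary.conjStarAlgAut_apply]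
  rw [key]
  have hd : (diagonal (fun i => A.trace - (hH.eigenvalues i : ℂ))).PosSemidef := by
    rw [posSemidef_diagonal_iff]
    intro i
    rw [htr, ← Finset.sum_erase_add _ _ (Finset.mem_univ i)]
    simp only [add_sub_cancel_right]
    apply Finset.sum_nonneg
    intro j _
    exact_mod_cast Complex.zero_le_real.mpr (hA.eigenvalues_nonneg j)
  exact hd.mul_mul_conjTranspose_same _

lemma smul_one_posSemidef {n : ℕ} {c : ℂ} (hc : 0 ≤ c) :
    (c • (1 : Matrix (Fin n) (Fin n) ℂ)).PosSemidef := by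
  rw [smul_one_eq_diagonal]
  exact posSemidef_diagonal_iff.mpr fun _ => hc

/-- The explicit square-root decomposition for a qubit two-outcome POVM: all four elements
are positive semidefinite, they satisfy the decomposition constraints, and the objective at
`φ` equals `1 − 2 p(1) + 2 ⟪φ, √M₁ φ⟫²`. -/
theorem qubit_square_root_decomposition
    (M : Fin 2 → Matrix (Fin 2) (Fin 2) ℂ)
    (hpsd : ∀ x, (M x).PosSemidef) (hsum : ∑ x, M x = 1)
    (htr : (M 0).trace.re ≤ (M 1).trace.re)
    (φ : Fin 2 → ℂ) (hφ : star φ ⬝ᵥ φ = 1) :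
    let p : Fin 2 → ℂ := fun x => star φ ⬝ᵥ (M x).mulVec φ
    let S : Matrix (Fin 2) (Fin 2) ℂ := (hpsd 0).sqrt
    let K11 : Matrix (Fin 2) (Fin 2) ℂ := S * vecMulVec φ (star φ) * S
    let K21 : Matrix (Fin 2) (Fin 2) ℂ := p 0 • (1 : Matrix (Fin 2) (Fin 2) ℂ) - K11
    let K12 : Matrix (Fin 2) (Fin 2) ℂ := M 0 - K11
    let K22 : Matrix (Fin 2) (Fin 2) ℂ := p 1 • (1 : Matrix (Fin 2) (Fin 2) ℂ) - K12
    K11.PosSemidef ∧ K21.PosSemidef ∧ K12.PosSemidef ∧ K22.PosSemidef ∧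
    K11 + K21 = p 0 • (1 : Matrix (Fin 2) (Fin 2) ℂ) ∧
    K12 + K22 = p 1 • (1 : Matrix (Fin 2) (Fin 2) ℂ) ∧
    K11 + K12 = M 0 ∧ K21 + K22 = M 1 ∧
    (star φ ⬝ᵥ K11.mulVec φ).re + (star φ ⬝ᵥ K22.mulVec φ).re
      = 1 - 2 * (p 0).re + 2 * ((star φ ⬝ᵥ S.mulVec φ).re) ^ 2 := by
  intro p S K11 K21 K12 K22
  have hSpsd : S.PosSemidef := (hpsd 0).posSemidef_sqrt
  have hS2 : S * S = M 0 := (hpsd 0).sqrt_mul_self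
  have hSh : Sᴴ = S := hSpsd.1
  set ψ : Fin 2 → ℂ := S.mulVec φ with hψ
  have hK11 : K11 = vecMulVec ψ (star ψ) := conj_outer S hSh φ
  have hψφ : star ψ ⬝ᵥ φ = star φ ⬝ᵥ S.mulVec φ := by
    rw [hψ, star_mulVec, hSh, ← dotProduct_mulVec]
  have htrK11 : K11.trace = p 0 := by
    rw [hK11, trace_vecMulVec', hψ, star_mulVec, hSh, dotProduct_mulVec, vecMul_vecMul, hS2,
      ← dotProduct_mulVec]
  have hsum01 : M 0 + M 1 = 1 := by rw [← hsum, Fin.sum_univ_two]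
  have hp01 : p 0 + p 1 = 1 := by
    have h : p 0 + p 1 = star φ ⬝ᵥ (M 0 + M 1).mulVec φ := by
      simp only [p, Matrix.add_mulVec, dotProduct_add]
    rw [h, hsum01, Matrix.one_mulVec, hφ]
  -- positive semidefiniteness
  have hK11psd : K11.PosSemidef := hK11 ▸ posSemidef_outer ψ
  have hK21psd : K21.PosSemidef := by
    have h := trace_smul_one_sub_posSemidef hK11psd
    rwa [htrK11] at h
  have hone : ((1 : Matrix (Fin 2) (Fin 2) ℂ) - vecMulVec φ (star φ)).PosSemidef := by
    have h := trace_smul_one_sub_posSemidef (posSemidef_outer φ)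
    rwa [trace_vecMulVec', hφ, one_smul] at h
  have hK12eq : K12 = S * ((1 : Matrix (Fin 2) (Fin 2) ℂ) - vecMulVec φ (star φ)) * S := by
    show M 0 - S * vecMulVec φ (star φ) * S = _
    rw [Matrix.mul_sub, Matrix.sub_mul, Matrix.mul_one, hS2]
  have hK12psd : K12.PosSemidef := by
    rw [hK12eq]
    have h := hone.mul_mul_conjTranspose_same S
    rwa [hSh] at h
  have him0 : (M 0).trace.im = 0 := by
    have h : (M 0)ᴴ.trace = (M 0).trace := by rw [(hpsd 0).1]
    rw [Matrix.trace_conjTranspose] at h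
    have := congrArg Complex.im h
    simp [Complex.conj_im] at this
    linarith
  have htr2 : (M 0).trace + (M 1).trace = 2 := by
    rw [← Matrix.trace_add, hsum01, Matrix.trace_one]
    norm_num
  have hc : (0 : ℂ) ≤ 1 - (M 0).trace := by
    rw [Complex.le_def]
    constructor
    · have := congrArg Complex.re htr2
      simp [Complex.add_re] at this
      simp only [Complex.sub_re, Complex.one_re, Complex.zero_re]
      linarith
    · simp [Complex.sub_im, him0]
  have htrK12 : K12.trace = (M 0).trace - p 0 := by
    show (M 0 - K11).trace = _
    rw [Matrix.trace_sub, htrK11]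
  have hK22eq : K22 = ((1 - (M 0).trace) • (1 : Matrix (Fin 2) (Fin 2) ℂ))
      + (K12.trace • (1 : Matrix (Fin 2) (Fin 2) ℂ) - K12) := by
    show p 1 • (1 : Matrix (Fin 2) (Fin 2) ℂ) - K12 = _
    have hp1 : p 1 = 1 - p 0 := by linear_combination hp01
    rw [hp1, htrK12]
    module
  have hK22psd : K22.PosSemidef := by
    rw [hK22eq]
    exact (smul_one_posSemidef hc).add (trace_smul_one_sub_posSemidef hK12psd)
  refine ⟨hK11psd, hK21psd, hK12psd, hK22psd, ?_, ?_, ?_, ?_, ?_⟩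
  · show K11 + (p 0 • (1 : Matrix (Fin 2) (Fin 2) ℂ) - K11) = _
    abel
  · show K12 + (p 1 • (1 : Matrix (Fin 2) (Fin 2) ℂ) - K12) = _
    abel
  · show K11 + (M 0 - K11) = M 0
    abel
  · show (p 0 • (1 : Matrix (Fin 2) (Fin 2) ℂ) - K11)
      + (p 1 • (1 : Matrix (Fin 2) (Fin 2) ℂ) - (M 0 - K11)) = M 1
    have h : (p 0 • (1 : Matrix (Fin 2) (Fin 2) ℂ) - K11)
        + (p 1 • (1 : Matrix (Fin 2) (Fin 2) ℂ) - (M 0 - K11))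
        = (p 0 + p 1) • (1 : Matrix (Fin 2) (Fin 2) ℂ) - M 0 := by
      rw [add_smul]; abel
    rw [h, hp01, one_smul, ← hsum01]
    abel
  · -- objective
    set t : ℂ := star φ ⬝ᵥ S.mulVec φ with htdef
    have ht : (0 : ℂ) ≤ t := hSpsd.dotProduct_mulVec_nonneg φ
    have htim : t.im = 0 := by
      have := Complex.nonneg_iff.mp ht
      linarith [this.2.symm]
    have q11 : star φ ⬝ᵥ K11.mulVec φ = t * t := by
      rw [hK11, dot_vecMulVec_mulVec, hψφ]
    have q0 : star φ ⬝ᵥ (M 0).mulVec φ = p 0 := rfl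
    have q22 : star φ ⬝ᵥ K22.mulVec φ = p 1 - (p 0 - t * t) := by
      show star φ ⬝ᵥ (p 1 • (1 : Matrix (Fin 2) (Fin 2) ℂ) - (M 0 - K11)).mulVec φ = _
      rw [Matrix.sub_mulVec, Matrix.sub_mulVec, dotProduct_sub, dotProduct_sub,
        Matrix.smul_mulVec, Matrix.one_mulVec, dotProduct_smul, hφ, q11, q0]
      simp
    rw [q11, q22]
    have hp0im : (p 0).im = 0 := by
      have h0 : (0 : ℂ) ≤ p 0 := (hpsd 0).dotProduct_mulVec_nonneg φ
      have := Complex.nonneg_iff.mp h0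
      linarith [this.2.symm]
    have hp1re : (p 1).re = 1 - (p 0).re := by
      have := congrArg Complex.re hp01
      simp [Complex.add_re] at this
      linarith
    simp only [Complex.sub_re, Complex.mul_re, htim, hp1re]
    ring
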